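/- Let X and Y be jointly Gaussian real random variables with mean zero, and let n ≥ 1 be an odd natural number. Then E[X·Y^n] = n·E[X·Y]·E[Y^(n-1)]. -/

import Mathlib

open MeasureTheory ProbabilityTheory Real NNReal ENNReal

lemma int_pow_exp {b : ℝ} (hb : 0 < b) (p : ℕ) :
    Integrable (fun x : ℝ => x ^ p * Real.exp (-b * x ^ 2)) := by
  have h := integrable_rpow_mul_exp_neg_mul_sq hb (s := (p : ℝ)) (by exact lt_of_lt_of_le neg_one_lt_zero (Nat.cast_nonneg p))
  simpa [Real.rpow_natCast] using h

lemma gauss_mom_rec {b : ℝ} (hb : 0 < b) (p : ℕ) :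
    ∫ x : ℝ, x ^ (p + 2) * Real.exp (-b * x ^ 2)
      = ((p : ℝ) + 1) / (2 * b) * ∫ x : ℝ, x ^ p * Real.exp (-b * x ^ 2) := by
  set u : ℝ → ℝ := fun x => x ^ (p + 1) with hu_def
  set v : ℝ → ℝ := fun x => Real.exp (-b * x ^ 2) with hv_def
  set u' : ℝ → ℝ := fun x => ((p : ℝ) + 1) * x ^ p with hu'_def
  set v' : ℝ → ℝ := fun x => Real.exp (-b * x ^ 2) * (-b * (2 * x)) with hv'_def
  have hu : ∀ x, HasDerivAt u (u' x) x := by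
    intro x
    simpa [hu_def, hu'_def] using hasDerivAt_pow (p + 1) x
  have hv : ∀ x, HasDerivAt v (v' x) x := by
    intro x
    have h1 : HasDerivAt (fun x : ℝ => -b * x ^ 2) (-b * (2 * x)) x := by
      simpa using (hasDerivAt_pow 2 x).const_mul (-b)
    simpa [hv_def, hv'_def] using h1.exp
  have huv' : u * v' = fun x => (-(2 * b)) * (x ^ (p + 2) * Real.exp (-b * x ^ 2)) := by
    funext x; simp [hu_def, hv'_def]; ring
  have hu'v : u' * v = fun x => ((p : ℝ) + 1) * (x ^ p * Real.exp (-b * x ^ 2)) := by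
    funext x; simp [hu_def, hu'_def, hv_def]; ring
  have huv : u * v = fun x => x ^ (p + 1) * Real.exp (-b * x ^ 2) := by
    funext x; simp [hu_def, hv_def]
  have key := MeasureTheory.integral_mul_deriv_eq_deriv_mul_of_integrable (fun x _ => hu x) (fun x _ => hv x)
    (by rw [huv']; exact ((int_pow_exp hb (p + 2)).const_mul _))
    (by rw [hu'v]; exact ((int_pow_exp hb p).const_mul _))
    (by rw [huv]; exact (int_pow_exp hb (p + 1)))
  have e1 : ∫ x : ℝ, u x * v' x
      = (-(2 * b)) * ∫ x : ℝ, x ^ (p + 2) * Real.exp (-b * x ^ 2) := by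
    simp only [hu_def, hv'_def]
    rw [← integral_const_mul]
    congr 1
  have e2 : ∫ x : ℝ, u' x * v x
      = ((p : ℝ) + 1) * ∫ x : ℝ, x ^ p * Real.exp (-b * x ^ 2) := by
    simp only [hu'_def, hv_def]
    rw [← integral_const_mul]
    congr 1
  rw [e1, e2] at key
  have hb' : (2 * b) ≠ 0 := by positivity
  field_simp at key ⊢
  linarith [key]

lemma gauss_mom_odd {b : ℝ} (hb : 0 < b) {p : ℕ} (hp : Odd p) :
    ∫ x : ℝ, x ^ p * Real.exp (-b * x ^ 2) = 0 := by
  have h := MeasureTheory.integral_neg_eq_self (fun x : ℝ => x ^ p * Real.exp (-b * x ^ 2)) volume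
  rw [show (fun x : ℝ => (-x) ^ p * Real.exp (-b * (-x) ^ 2))
      = fun x : ℝ => -(x ^ p * Real.exp (-b * x ^ 2)) by
    funext x; rw [hp.neg_pow]; ring_nf] at h
  rw [integral_neg] at h
  linarith


noncomputable def Dfac : ℕ → ℝ
  | 0 => 1
  | (j+1) => (2 * j + 1) * Dfac j

lemma integral_gaussianReal_eq {v : ℝ≥0} (hv : v ≠ 0) (f : ℝ → ℝ) :
    ∫ x, f x ∂(gaussianReal 0 v) = ∫ x, gaussianPDFReal 0 v x * f x := by
  rw [gaussianReal_of_var_ne_zero _ hv]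
  have : gaussianPDF 0 v = fun x => ((gaussianPDFReal 0 v x).toNNReal : ℝ≥0∞) := by
    funext x; rw [gaussianPDF]; rfl
  rw [this, integral_withDensity_eq_integral_smul
    ((measurable_gaussianPDFReal 0 v).real_toNNReal)]
  congr 1; funext x
  simp [NNReal.smul_def, Real.coe_toNNReal _ (gaussianPDFReal_nonneg 0 v x)]

lemma gaussianPDFReal_zero_eq {v : ℝ≥0} (x : ℝ) :
    gaussianPDFReal 0 v x = (Real.sqrt (2 * π * v))⁻¹ * Real.exp (-(2 * v : ℝ)⁻¹ * x ^ 2) := by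
  simp only [gaussianPDFReal, sub_zero]
  congr 1
  rw [neg_div, div_eq_mul_inv, mul_comm, neg_mul]

lemma integrable_pow_gaussianReal (v : ℝ≥0) (p : ℕ) :
    Integrable (fun x : ℝ => x ^ p) (gaussianReal 0 v) := by
  by_cases hv : v = 0
  · rw [hv, gaussianReal_zero_var]
    exact (integrable_const ((0:ℝ) ^ p)).congr (ae_eq_dirac (fun x : ℝ => x ^ p)).symm
  · have hvpos : (0:ℝ) < (v:ℝ) := by
      exact_mod_cast pos_iff_ne_zero.mpr hv
    have hb : (0:ℝ) < (2 * (v:ℝ))⁻¹ := by positivity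
    rw [gaussianReal_of_var_ne_zero _ hv]
    have hpdf : gaussianPDF 0 v = fun x => ((gaussianPDFReal 0 v x).toNNReal : ℝ≥0∞) := by
      funext x; rw [gaussianPDF]; rfl
    rw [hpdf]
    refine (integrable_withDensity_iff_integrable_coe_smul
      ((measurable_gaussianPDFReal 0 v).real_toNNReal)).mpr ?_
    refine ((int_pow_exp hb p).const_mul ((Real.sqrt (2 * π * v))⁻¹)).congr ?_
    filter_upwards with x
    rw [smul_eq_mul, Real.coe_toNNReal _ (gaussianPDFReal_nonneg 0 v x),
      gaussianPDFReal_zero_eq]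
    ring

lemma integral_pdf_pow {v : ℝ≥0} (hv : v ≠ 0) (q : ℕ) :
    ∫ x, gaussianPDFReal 0 v x * x ^ q
      = (Real.sqrt (2 * π * v))⁻¹ * ∫ x : ℝ, x ^ q * Real.exp (-(2 * (v:ℝ))⁻¹ * x ^ 2) := by
  simp_rw [gaussianPDFReal_zero_eq]
  rw [← integral_const_mul]
  congr 1; funext x; ring

lemma gaussianReal_mom_rec {v : ℝ≥0} (hv : v ≠ 0) (p : ℕ) :
    ∫ x, x ^ (p + 2) ∂(gaussianReal 0 v)
      = ((p : ℝ) + 1) * (v : ℝ) * ∫ x, x ^ p ∂(gaussianReal 0 v) := by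
  have hvpos : (0:ℝ) < (v:ℝ) := by exact_mod_cast pos_iff_ne_zero.mpr hv
  have hb : (0:ℝ) < (2 * (v:ℝ))⁻¹ := by positivity
  rw [integral_gaussianReal_eq hv, integral_gaussianReal_eq hv,
    integral_pdf_pow hv, integral_pdf_pow hv, gauss_mom_rec hb p]
  have h2b : 2 * (2 * (v:ℝ))⁻¹ = (v:ℝ)⁻¹ := by
    field_simp
  rw [h2b]
  field_simp

lemma gaussianReal_mom_even (v : ℝ≥0) (j : ℕ) :
    ∫ x, x ^ (2 * j) ∂(gaussianReal 0 v) = Dfac j * (v : ℝ) ^ j := by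
  by_cases hv : v = 0
  · subst hv
    rw [gaussianReal_zero_var, integral_dirac]
    cases j with
    | zero => simp [Dfac]
    | succ j =>
      rw [zero_pow (by omega)]
      push_cast
      rw [zero_pow (by omega)]
      ring
  · induction j with
    | zero => simp [Dfac]
    | succ j ih =>
      have : 2 * (j + 1) = 2 * j + 2 := by ring
      rw [this, gaussianReal_mom_rec hv, ih, Dfac]
      push_cast
      ring

lemma gaussianReal_mom_odd (v : ℝ≥0) {p : ℕ} (hp : Odd p) :
    ∫ x, x ^ p ∂(gaussianReal 0 v) = 0 := by
  by_cases hv : v = 0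
  · subst hv
    rw [gaussianReal_zero_var, integral_dirac, zero_pow]
    rintro rfl
    simp at hp
  · have hvpos : (0:ℝ) < (v:ℝ) := by exact_mod_cast pos_iff_ne_zero.mpr hv
    have hb : (0:ℝ) < (2 * (v:ℝ))⁻¹ := by positivity
    rw [integral_gaussianReal_eq hv, integral_pdf_pow hv, gauss_mom_odd hb hp, mul_zero]

lemma Dfac_zero : Dfac 0 = 1 := rfl
lemma Dfac_succ (j : ℕ) : Dfac (j+1) = (2 * j + 1) * Dfac j := rfl
lemma Dfac_one : Dfac 1 = 1 := by norm_num [Dfac_succ 0, Dfac_zero]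

lemma aemeas_of_map_gauss {Ω : Type*} [MeasurableSpace Ω] (P : Measure Ω) (f : Ω → ℝ)
    (v : NNReal) (h : Measure.map f P = gaussianReal 0 v) : AEMeasurable f P := by
  by_contra hc
  rw [Measure.map_of_not_aemeasurable hc] at h
  have h1 := congrArg (fun μ : Measure ℝ => μ Set.univ) h
  simp [measure_univ] at h1

/-- Isserlis-type consequence: for jointly centered Gaussian `X, Y` and odd `n ≥ 1`,
`E[X·Yⁿ] = n·E[X·Y]·E[Yⁿ⁻¹]`. -/
theorem stmt0 {Ω : Type*} [MeasurableSpace Ω] (P : Measure Ω) [IsProbabilityMeasure P]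
    (X Y : Ω → ℝ)
    (hGauss : ∀ a b : ℝ, ∃ v : NNReal,
      Measure.map (fun ω => a * X ω + b * Y ω) P = gaussianReal 0 v)
    (n : ℕ) (hn : Odd n) (hn1 : 1 ≤ n) :
    ∫ ω, X ω * (Y ω) ^ n ∂P
      = n * (∫ ω, X ω * Y ω ∂P) * ∫ ω, (Y ω) ^ (n - 1) ∂P := by
  obtain ⟨m', rfl⟩ := hn
  clear hn1
  set m : ℕ := m' + 1 with hm
  choose V hV using hGauss
  -- a.e.-measurability
  have hX : AEMeasurable X P := by
    have h := hV 1 0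
    rw [show (fun ω => 1 * X ω + 0 * Y ω) = X from funext fun ω => by ring] at h
    exact aemeas_of_map_gauss P X _ h
  have hY : AEMeasurable Y P := by
    have h := hV 0 1
    rw [show (fun ω => 0 * X ω + 1 * Y ω) = Y from funext fun ω => by ring] at h
    exact aemeas_of_map_gauss P Y _ h
  have hab : ∀ a b : ℝ, AEMeasurable (fun ω => a * X ω + b * Y ω) P :=
    fun a b => ((hX.const_mul a).add (hY.const_mul b))
  -- integral transfer to the Gaussian
  have mapint : ∀ a b : ℝ, ∀ p : ℕ,
      ∫ ω, (a * X ω + b * Y ω) ^ p ∂P = ∫ x, x ^ p ∂(gaussianReal 0 (V a b)) := by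
    intro a b p
    rw [← hV a b, integral_map (hab a b)
      (by exact (measurable_id.pow_const p).aestronglyMeasurable)]
  -- integrability of powers of combinations
  have momint : ∀ a b : ℝ, ∀ p : ℕ, Integrable (fun ω => (a * X ω + b * Y ω) ^ p) P := by
    intro a b p
    have h := integrable_pow_gaussianReal (V a b) p
    rw [← hV a b] at h
    exact (integrable_map_measure
      (by exact (measurable_id.pow_const p).aestronglyMeasurable) (hab a b)).mp h
  -- integrability of mixed moments
  have mixed : ∀ k l : ℕ, Integrable (fun ω => X ω ^ k * Y ω ^ l) P := by
    intro k l
    have hX2k : Integrable (fun ω => X ω ^ (2 * k)) P :=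
      (momint 1 0 (2 * k)).congr (Filter.Eventually.of_forall fun ω => by ring)
    have hY2l : Integrable (fun ω => Y ω ^ (2 * l)) P :=
      (momint 0 1 (2 * l)).congr (Filter.Eventually.of_forall fun ω => by ring)
    refine Integrable.mono' ((hX2k.add hY2l).div_const 2)
      ((hX.pow_const k).mul (hY.pow_const l)).aestronglyMeasurable
      (Filter.Eventually.of_forall fun ω => ?_)
    have h2 := two_mul_le_add_sq (|X ω| ^ k) (|Y ω| ^ l)
    have e1 : (|X ω| ^ k) ^ 2 = X ω ^ (2 * k) := by
      rw [← pow_mul, mul_comm k 2, pow_mul, sq_abs, ← pow_mul]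
    have e2 : (|Y ω| ^ l) ^ 2 = Y ω ^ (2 * l) := by
      rw [← pow_mul, mul_comm l 2, pow_mul, sq_abs, ← pow_mul]
    have e3 : ‖X ω ^ k * Y ω ^ l‖ = |X ω| ^ k * |Y ω| ^ l := by
      rw [Real.norm_eq_abs, abs_mul, abs_pow, abs_pow]
    rw [e3]
    show |X ω| ^ k * |Y ω| ^ l ≤ (X ω ^ (2 * k) + Y ω ^ (2 * l)) / 2
    nlinarith [h2, e1, e2]
  have intX2 : Integrable (fun ω => X ω ^ 2) P :=
    (mixed 2 0).congr (Filter.Eventually.of_forall fun ω => by ring)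
  have intY2 : Integrable (fun ω => Y ω ^ 2) P :=
    (mixed 0 2).congr (Filter.Eventually.of_forall fun ω => by ring)
  have intXY : Integrable (fun ω => X ω * Y ω) P :=
    (mixed 1 1).congr (Filter.Eventually.of_forall fun ω => by ring)
  set A : ℝ := ∫ ω, X ω ^ 2 ∂P with hA
  set Cc : ℝ := ∫ ω, X ω * Y ω ∂P with hCc
  set B : ℝ := ∫ ω, Y ω ^ 2 ∂P with hB
  -- variance identification
  have var_eq : ∀ a b : ℝ, (V a b : ℝ) = a ^ 2 * A + 2 * a * b * Cc + b ^ 2 * B := by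
    intro a b
    have h2 := mapint a b 2
    rw [show (2 : ℕ) = 2 * 1 from rfl, gaussianReal_mom_even (V a b) 1,
      Dfac_one, one_mul, pow_one] at h2
    have expand : ∫ ω, (a * X ω + b * Y ω) ^ 2 ∂P
        = a ^ 2 * A + 2 * a * b * Cc + b ^ 2 * B := by
      have i1 : Integrable (fun ω => a ^ 2 * X ω ^ 2) P := intX2.const_mul _
      have i2 : Integrable (fun ω => 2 * a * b * (X ω * Y ω)) P := intXY.const_mul _
      have i3 : Integrable (fun ω => b ^ 2 * Y ω ^ 2) P := intY2.const_mul _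
      have i23 : Integrable (fun ω => 2 * a * b * (X ω * Y ω) + b ^ 2 * Y ω ^ 2) P := i2.add i3
      rw [show (fun ω => (a * X ω + b * Y ω) ^ 2)
          = fun ω => a ^ 2 * X ω ^ 2 + (2 * a * b * (X ω * Y ω) + b ^ 2 * Y ω ^ 2)
          from funext fun ω => by ring]
      rw [integral_add i1 i23, integral_add i2 i3,
        integral_const_mul, integral_const_mul, integral_const_mul, ← hA, ← hCc, ← hB]
      ring
    rw [expand] at h2
    exact h2.symm
  -- expansion of the even moment as a polynomial in a
  have keyfun : ∀ a : ℝ,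
      (∑ k ∈ Finset.range (2 * m + 1),
        ((2 * m).choose k : ℝ) * (∫ ω, X ω ^ k * Y ω ^ (2 * m - k) ∂P) * a ^ k)
      = Dfac m * (A * a ^ 2 + 2 * Cc * a + B) ^ m := by
    intro a
    have e : ∀ ω, (a * X ω + 1 * Y ω) ^ (2 * m)
        = ∑ k ∈ Finset.range (2 * m + 1),
            ((2 * m).choose k : ℝ) * (X ω ^ k * Y ω ^ (2 * m - k)) * a ^ k := by
      intro ω
      rw [add_pow]
      refine Finset.sum_congr rfl fun k hk => ?_
      rw [mul_pow, one_mul]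
      ring
    have lhs_eq : ∫ ω, (a * X ω + 1 * Y ω) ^ (2 * m) ∂P
        = ∑ k ∈ Finset.range (2 * m + 1),
            ((2 * m).choose k : ℝ) * (∫ ω, X ω ^ k * Y ω ^ (2 * m - k) ∂P) * a ^ k := by
      rw [show (fun ω => (a * X ω + 1 * Y ω) ^ (2 * m))
          = fun ω => ∑ k ∈ Finset.range (2 * m + 1),
            ((2 * m).choose k : ℝ) * (X ω ^ k * Y ω ^ (2 * m - k)) * a ^ k
          from funext fun ω => e ω]
      rw [integral_finset_sum _ (fun k _ =>
        (((mixed k (2 * m - k)).const_mul _).mul_const _))]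
      refine Finset.sum_congr rfl fun k hk => ?_
      rw [integral_mul_const, integral_const_mul]
    have rhs_eq : ∫ ω, (a * X ω + 1 * Y ω) ^ (2 * m) ∂P
        = Dfac m * (A * a ^ 2 + 2 * Cc * a + B) ^ m := by
      rw [mapint a 1 (2 * m), gaussianReal_mom_even (V a 1) m, var_eq a 1]
      ring_nf
    rw [← lhs_eq, rhs_eq]
  -- differentiate both sides at 0
  set c : ℕ → ℝ := fun k => ((2 * m).choose k : ℝ) * (∫ ω, X ω ^ k * Y ω ^ (2 * m - k) ∂P)
    with hc
  have hder1 : HasDerivAt (fun a : ℝ => ∑ k ∈ Finset.range (2 * m + 1), c k * a ^ k)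
      (∑ k ∈ Finset.range (2 * m + 1), c k * ((k : ℝ) * 0 ^ (k - 1))) 0 := by
    refine HasDerivAt.fun_sum fun k _ => ?_
    exact (hasDerivAt_pow k 0).const_mul (c k)
  have sum_val : (∑ k ∈ Finset.range (2 * m + 1), c k * ((k : ℝ) * 0 ^ (k - 1))) = c 1 := by
    rw [Finset.sum_eq_single 1]
    · norm_num
    · intro k hk hk1
      match k, hk1 with
      | 0, _ => norm_num
      | (j+2), _ => simp [zero_pow]
    · intro h
      exact absurd (Finset.mem_range.mpr (by omega)) h
  have hq : HasDerivAt (fun a : ℝ => A * a ^ 2 + 2 * Cc * a + B) (2 * Cc) 0 := by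
    have h1 : HasDerivAt (fun a : ℝ => A * a ^ 2) (A * (2 * 0 ^ 1)) 0 :=
      (hasDerivAt_pow 2 (0:ℝ)).const_mul A
    have h2 : HasDerivAt (fun a : ℝ => 2 * Cc * a + B) (2 * Cc) 0 := by
      simpa using ((hasDerivAt_id (0:ℝ)).const_mul (2 * Cc)).add_const B
    have h3 : (fun a : ℝ => A * a ^ 2 + 2 * Cc * a + B)
        = fun a : ℝ => A * a ^ 2 + (2 * Cc * a + B) := funext fun a => by ring
    rw [h3]
    simpa using h1.fun_add h2
  have hder2 : HasDerivAt (fun a : ℝ => Dfac m * (A * a ^ 2 + 2 * Cc * a + B) ^ m)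
      (Dfac m * ((m : ℝ) * B ^ (m - 1) * (2 * Cc))) 0 := by
    have h := (hq.pow m).const_mul (Dfac m)
    simpa using h
  have hder1' : HasDerivAt (fun a : ℝ => Dfac m * (A * a ^ 2 + 2 * Cc * a + B) ^ m)
      (c 1) 0 := by
    rw [← sum_val]
    refine hder1.congr_of_eventuallyEq ?_
    filter_upwards with a
    simp only [hc]
    exact (keyfun a).symm
  have hc1 : c 1 = Dfac m * ((m : ℝ) * B ^ (m - 1) * (2 * Cc)) := hder1'.unique hder2
  -- compute c 1
  have hmn : 2 * m - 1 = 2 * m' + 1 := by omega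
  have choose1 : ((2 * m).choose 1 : ℝ) = 2 * m := by
    rw [Nat.choose_one_right]
    push_cast
    ring
  have hc1' : c 1 = 2 * (m : ℝ) * ∫ ω, X ω * Y ω ^ (2 * m' + 1) ∂P := by
    rw [hc]
    simp only [hmn, choose1]
    rw [show (fun ω => X ω ^ 1 * Y ω ^ (2 * m' + 1)) = fun ω => X ω * Y ω ^ (2 * m' + 1)
      from funext fun ω => by ring]
  have main : ∫ ω, X ω * Y ω ^ (2 * m' + 1) ∂P = Dfac m * B ^ m' * Cc := by
    have h2m : (2 * (m : ℝ)) ≠ 0 := by positivity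
    have this1 := hc1' ▸ hc1
    have hmm : m - 1 = m' := by omega
    rw [hmm] at this1
    apply mul_left_cancel₀ h2m
    rw [this1]
    ring
  -- the (n-1)-th moment of Y
  have ymom : ∫ ω, Y ω ^ (2 * m' + 1 - 1) ∂P = Dfac m' * B ^ m' := by
    have h := mapint 0 1 (2 * m')
    rw [show (fun ω => (0 * X ω + 1 * Y ω) ^ (2 * m')) = fun ω => Y ω ^ (2 * m')
      from funext fun ω => by ring] at h
    have hv01 : (V 0 1 : ℝ) = B := by rw [var_eq]; ring
    rw [show 2 * m' + 1 - 1 = 2 * m' from by omega, h,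
      gaussianReal_mom_even (V 0 1) m', hv01]
  rw [main, ymom, hm, Dfac_succ]
  push_cast
  ring
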